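/- Let G be a simplicial group, C a small category, and δ a twisted structure on C with coefficients in G. Then the twisted face homomorphisms d_i^δ : F^G[C]_n → F^G[C]_{n−1} satisfy the Δ-identity: for all n ≥ 2 and all 0 ≤ j ≤ i ≤ n−1, d_i^δ ∘ d_j^δ = d_j^δ ∘ d_{i+1}^δ as group homomorphisms F^G[C]_n → F^G[C]_{n−2}. Hence F^{G,Δ}_δ[C] = {F^G[C]_n} is a Δ-group (a sequence of groups with face homomorphisms satisfying d_i d_j = d_j d_{i+1} for i ≥ j). -/

import Mathlib

open CategoryTheory Simplicial

universe u

namespace TwistedSG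

variable (C : Type u) [SmallCategory C] (G : SimplicialObject GrpCat.{u}) (a₀ : C)

/-- The group of `n`-simplices of the simplicial group `G`. -/
abbrev Gn (n : ℕ) : Type u := ↥(G.obj (Opposite.op (SimplexCategory.mk n)))

/-- The face map of the nerve of `C` (whose `n`-simplices are `ComposableArrows C n`). -/
def nerveFace {n : ℕ} (i : Fin (n + 2)) (x : ComposableArrows C (n + 1)) :
    ComposableArrows C n :=
  (nerve C).δ i x

/-- The totally degenerate `n`-simplex `a₀ⁿ` of the nerve at the base object `a₀`. -/
def basept (n : ℕ) : ComposableArrows C n :=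
  (CategoryTheory.Functor.const (Fin (n + 1))).obj a₀

/-- The free product of copies of `G_n` indexed by the `n`-simplices of the nerve. -/
abbrev FreeProd (n : ℕ) : Type u :=
  Monoid.CoprodI (fun _ : ComposableArrows C n => Gn G n)

/-- The inclusion of the copy of `G_n` labelled by the simplex `x`. -/
def incl {n : ℕ} (x : ComposableArrows C n) : Gn G n →* FreeProd C G n :=
  Monoid.CoprodI.of (M := fun _ : ComposableArrows C n => Gn G n) (i := x)

/-- `F^G[C]_n`: the quotient of the free product of the copies `(G_n)_x`, `x ∈ N(C)_n`,
by the normal closure of the copy indexed by the basepoint simplex `a₀ⁿ`. -/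
abbrev FG (n : ℕ) : Type u :=
  FreeProd C G n ⧸ Subgroup.normalClosure (Set.range (incl C G (basept C a₀ n)))

/-- The twisted face homomorphism on the free product, with values in the quotient:
`g_x ↦ (δ_{v_i}(d_i g))_{d_i x}`. -/
noncomputable def dFaceAux (δ : C → (G ⟶ G)) {n : ℕ} (i : Fin (n + 2)) :
    FreeProd C G (n + 1) →* FG C G a₀ n :=
  Monoid.CoprodI.lift fun x =>
    ((QuotientGroup.mk' _).comp (incl C G (nerveFace C i x))).comp
      ((((δ (x.obj i)).app (Opposite.op (SimplexCategory.mk n))).hom :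
          Gn G n →* Gn G n).comp
        ((G.δ i).hom : Gn G (n + 1) →* Gn G n))

lemma nerveFace_basept {n : ℕ} (i : Fin (n + 2)) :
    nerveFace C i (basept C a₀ (n + 1)) = basept C a₀ n := rfl

/-- The twisted face homomorphism `d_i^δ : F^G[C]_{n+1} → F^G[C]_n`, determined by
`d_i^δ(g_x) = (δ_{v_i}(d_i g))_{d_i x}`. -/
noncomputable def dFace (δ : C → (G ⟶ G)) {n : ℕ} (i : Fin (n + 2)) :
    FG C G a₀ (n + 1) →* FG C G a₀ n :=
  QuotientGroup.lift _ (dFaceAux C G a₀ δ i) (by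
    have hsub : Set.range (incl C G (basept C a₀ (n + 1))) ⊆
        ↑(dFaceAux C G a₀ δ i).ker := by
      rintro _ ⟨g, rfl⟩
      have : dFaceAux C G a₀ δ i (incl C G (basept C a₀ (n + 1)) g) =
          (QuotientGroup.mk' _) (incl C G (basept C a₀ n)
            ((((δ ((basept C a₀ (n+1)).obj i)).app (Opposite.op (SimplexCategory.mk n))))
              (((G.δ i).hom : Gn G (n + 1) →* Gn G n) g))) := by
        simp only [dFaceAux, incl, Monoid.CoprodI.lift_of]; rfl
      rw [SetLike.mem_coe, MonoidHom.mem_ker, this, QuotientGroup.mk'_apply,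
        QuotientGroup.eq_one_iff]
      exact Subgroup.subset_normalClosure ⟨_, rfl⟩
    exact fun y hy => MonoidHom.mem_ker.mp (Subgroup.normalClosure_le_normal hsub hy))

lemma dFace_mk_incl (δ : C → (G ⟶ G)) {n : ℕ} (i : Fin (n + 2))
    (x : ComposableArrows C (n + 1)) (g : Gn G (n + 1)) :
    dFace C G a₀ δ i (QuotientGroup.mk (incl C G x g)) =
      QuotientGroup.mk (incl C G (nerveFace C i x)
        (((δ (x.obj i)).app (Opposite.op (SimplexCategory.mk n)))
          (((G.δ i).hom : Gn G (n + 1) →* Gn G n) g))) := by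
  simp only [dFace, QuotientGroup.lift_mk, dFaceAux, incl, Monoid.CoprodI.lift_of]
  rfl

lemma nerveFace_obj {n : ℕ} (i : Fin (n + 2)) (x : ComposableArrows C (n + 1))
    (k : Fin (n + 1)) : (nerveFace C i x).obj k = x.obj (i.succAbove k) := rfl

lemma delta_elt (δ : C → (G ⟶ G)) {n : ℕ} (v w : C)
    (hvw : δ v ≫ δ w = δ w ≫ δ v) (i j : Fin (n + 2)) (hij : j ≤ i)
    (g : Gn G (n + 2)) :
    ((δ w).app (Opposite.op (SimplexCategory.mk n)))
        ((G.δ i) (((δ v).app (Opposite.op (SimplexCategory.mk (n + 1))))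
          ((G.δ j.castSucc) g))) =
      ((δ v).app (Opposite.op (SimplexCategory.mk n)))
        ((G.δ j) (((δ w).app (Opposite.op (SimplexCategory.mk (n + 1))))
          ((G.δ i.succ) g))) := by
  have hnat : ∀ (u : C) (k : Fin (n + 2)) (h : Gn G (n + 1)),
      (G.δ k) (((δ u).app (Opposite.op (SimplexCategory.mk (n + 1)))) h) =
        ((δ u).app (Opposite.op (SimplexCategory.mk n))) ((G.δ k) h) := by
    intro u k h
    have := CategoryTheory.ConcreteCategory.congr_hom
      ((δ u).naturality ((SimplexCategory.δ k).op :
        Opposite.op (SimplexCategory.mk (n + 1)) ⟶ Opposite.op (SimplexCategory.mk n))) h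
    simp only [CategoryTheory.comp_apply] at this
    simp only [SimplicialObject.δ]
    exact this.symm
  rw [hnat, hnat]
  have hδ : (G.δ i) ((G.δ j.castSucc) g) = (G.δ j) ((G.δ i.succ) g) := by
    have := CategoryTheory.ConcreteCategory.congr_hom
      (CategoryTheory.SimplicialObject.δ_comp_δ (X := G) hij) g
    simpa using this.symm
  rw [hδ]
  have hc := CategoryTheory.ConcreteCategory.congr_hom
    (congrArg (fun (f : G ⟶ G) => f.app (Opposite.op (SimplexCategory.mk n))) hvw)
    ((G.δ j) ((G.δ i.succ) g))
  simpa using hc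

lemma nerveFace_comm {n : ℕ} (i j : Fin (n + 2)) (hij : j ≤ i)
    (x : ComposableArrows C (n + 2)) :
    nerveFace C i (nerveFace C j.castSucc x) =
      nerveFace C j (nerveFace C i.succ x) := by
  have := CategoryTheory.ConcreteCategory.congr_hom (CategoryTheory.SimplicialObject.δ_comp_δ (X := nerve C) hij) x
  exact this.symm

end TwistedSG

/-- for a twisted structure `δ` on a small category `C` with coefficients in a
simplicial group `G`, the twisted face homomorphisms `d_i^δ : F^G[C]_n → F^G[C]_{n−1}`
satisfy the Δ-identity `d_i^δ ∘ d_j^δ = d_j^δ ∘ d_{i+1}^δ` for `0 ≤ j ≤ i ≤ n − 1`; hence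
`{F^G[C]_n}` is a Δ-group. -/
theorem TwistedSG.dFace_delta_identity {C : Type u} [SmallCategory C]
    (G : SimplicialObject GrpCat.{u}) (a₀ : C) (δ : C → (G ⟶ G))
    (hcomm : ∀ v w : C, (Nonempty (v ⟶ w) ∨ Nonempty (w ⟶ v)) →
      δ v ≫ δ w = δ w ≫ δ v)
    {n : ℕ} (i j : Fin (n + 2)) (hij : j ≤ i) :
    (dFace C G a₀ δ i).comp (dFace C G a₀ δ j.castSucc) =
      (dFace C G a₀ δ j).comp (dFace C G a₀ δ i.succ) := by
  apply MonoidHom.ext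
  intro q
  refine QuotientGroup.induction_on q fun w => ?_
  simp only [MonoidHom.comp_apply]
  induction w using Monoid.CoprodI.induction_on with
  | one => simp
  | mul a b ha hb =>
      simp only [QuotientGroup.mk_mul, map_mul, ha, hb]
  | of x g =>
      rw [show (Monoid.CoprodI.of g : FreeProd C G (n + 2)) = incl C G x g from rfl]
      rw [dFace_mk_incl, dFace_mk_incl, dFace_mk_incl, dFace_mk_incl]
      rw [nerveFace_comm C i j hij x]
      congr 1
      -- vertex identifications
      have hv1 : (nerveFace C j.castSucc x).obj i = x.obj i.succ := by
        rw [nerveFace_obj, Fin.succAbove_of_le_castSucc _ _ (by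
          simpa using hij)]
      have hv2 : (nerveFace C i.succ x).obj j = x.obj j.castSucc := by
        rw [nerveFace_obj, Fin.succAbove_of_castSucc_lt _ _ (by
          simpa [Fin.castSucc_lt_succ_iff] using hij)]
      rw [hv1, hv2]
      exact congrArg (incl C G (nerveFace C j (nerveFace C i.succ x))) (delta_elt C G δ (x.obj j.castSucc) (x.obj i.succ)
        (hcomm (x.obj j.castSucc) (x.obj i.succ)
          (Or.inl ⟨x.map (homOfLE (show j.castSucc ≤ i.succ from
            (Fin.castSucc_lt_succ_iff.mpr hij).le))⟩)) i j hij g)
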